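/- If f : O → ℂ is Haar-integrable and continuous at a point x ∈ O, then the level-ordered partial sums of its Fourier series converge to f(x): f(x) = lim_{L→∞} Σ_{γ ∈ Ô, ℓ(γ) ≤ L} f̂(γ)·γ(x). Moreover, if f is continuous at every point of O, then this convergence is uniform on O. -/

import Mathlib

open MeasureTheory Set Filter Topology
open scoped ENNReal NNReal

noncomputable section

namespace NAKoksma

variable (K : Type*) [NontriviallyNormedField K] [IsUltrametricDist K]

/-- The ring of integers `O = {x : K | ‖x‖ ≤ 1}` of a non-Archimedean normed field. -/
def RoI : Subring K where
  carrier := {x : K | ‖x‖ ≤ 1}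
  mul_mem' := fun {a b} ha hb => by
    simp only [Set.mem_setOf_eq] at *
    calc ‖a * b‖ = ‖a‖ * ‖b‖ := norm_mul a b
      _ ≤ 1 * 1 := mul_le_mul ha hb (norm_nonneg b) zero_le_one
      _ = 1 := one_mul 1
  one_mem' := by simp
  add_mem' := fun {a b} ha hb => by
    simp only [Set.mem_setOf_eq] at *
    exact (IsUltrametricDist.norm_add_le_max a b).trans (max_le ha hb)
  zero_mem' := by simp
  neg_mem' := fun {a} ha => by
    simp only [Set.mem_setOf_eq, norm_neg] at *
    exact ha

variable (q : ℕ)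

/-- The disc of radius `q ^ (-n)` centered at `a` in the ring of integers. -/
def disc (a : RoI K) (n : ℕ) : Set (RoI K) :=
  {x : RoI K | ‖(x : K) - (a : K)‖ ≤ (q : ℝ) ^ (-(n : ℤ))}

/-- A subset of `O` is a disc if it is of the form `D_r(a)` with `r = q^(-n)`, `0 < r ≤ 1`. -/
def IsDisc (D : Set (RoI K)) : Prop := ∃ (a : RoI K) (n : ℕ), D = disc K q a n

/-- A Taibleson partition: a finite collection of discs partitioning `O`. -/
def IsTaibPartition (P : Finset (Set (RoI K))) : Prop :=
  (∀ D ∈ P, IsDisc K q D) ∧ (P : Set (Set (RoI K))).PairwiseDisjoint id ∧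
    ⋃₀ (P : Set (Set (RoI K))) = Set.univ

/-- `V_Π(f) = Σ_{D ∈ Π} sup_{x,y ∈ D} (f x - f y)`, valued in `[0,∞]`. -/
def VPi (f : RoI K → ℝ) (P : Finset (Set (RoI K))) : ℝ≥0∞ :=
  ∑ D ∈ P, ⨆ x ∈ D, ⨆ y ∈ D, ENNReal.ofReal (f x - f y)

/-- The Taibleson variation `V_Taib(f) = sup_Π V_Π(f)`. -/
def VTaib (f : RoI K → ℝ) : ℝ≥0∞ :=
  ⨆ P : {P : Finset (Set (RoI K)) // IsTaibPartition K q P}, VPi K f P.1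

variable [MeasurableSpace K]

/-- The discrepancy `Δ(X) = sup_D | |X ∩ D| / |X| - μ(D) |` of a finite set `X ⊆ O`. -/
def discrepancy (μ : Measure (RoI K)) (X : Finset (RoI K)) : ℝ :=
  ⨆ D : {D : Set (RoI K) // IsDisc K q D},
    |(Nat.card ↥((X : Set (RoI K)) ∩ D.1) : ℝ) / (X.card : ℝ) - (μ D.1).toReal|

variable (π : RoI K)

/-- The `i`-th point `m_i = a_0 + a_1 π + ⋯ + a_{λ-1} π^{λ-1}` in the dictionary
ordering of the coefficient strings `(a_0, …, a_{λ-1})` with respect to the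
indexing of the coset representatives `S`. -/
def beerPoint (S : ℕ → RoI K) (lam i : ℕ) : RoI K :=
  ∑ j ∈ Finset.range lam, S (i / q ^ (lam - 1 - j) % q) * π ^ j

/-- `V_λ(f) = sup_{x_i ∈ E_i} Σ_{i=1}^{q^λ - 1} |f(x_i) - f(x_{i-1})|` over the ordered Beer
partition `E_0, …, E_{q^λ - 1}` of level `λ`. -/
def VBeerLevel (S : ℕ → RoI K) (f : RoI K → ℝ) (lam : ℕ) : ℝ≥0∞ :=
  ⨆ x : {x : ℕ → RoI K // ∀ i < q ^ lam, x i ∈ disc K q (beerPoint K q π S lam i) lam},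
    ∑ i ∈ Finset.Ico 1 (q ^ lam), ENNReal.ofReal |f (x.1 i) - f (x.1 (i - 1))|

/-- The Beer variation `V_Beer(f) = lim_{λ→∞} V_λ(f) = sup_{λ ≥ 1} V_λ(f)`. -/
def VBeer (S : ℕ → RoI K) (f : RoI K → ℝ) : ℝ≥0∞ :=
  ⨆ lam : ℕ, VBeerLevel K q π S f (lam + 1)

/-- `S : ℕ → O` (through indices `0, …, q-1`) is a complete ordered system of coset
representatives for the residue field `O/πO`, containing `0`. -/
def IsRepSystem (S : ℕ → RoI K) : Prop :=
  (∃ i, i < q ∧ S i = 0) ∧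
    Function.Bijective fun i : Fin q => Ideal.Quotient.mk (Ideal.span {π}) (S (i : ℕ))

/-- The Berkovich-analytic variation
`V_Berk(f) = Σ_D Σ_{D' ≺ D} |f(D') - f(D)|`, where `D' ≺ D` means `D' ⊆ D` and
`μ(D') = μ(D)/q`, and `f(D)` denotes the average of `f` over `D`. -/
def VBerk (μ : Measure (RoI K)) (f : RoI K → ℝ) : ℝ≥0∞ :=
  ∑' D : {D : Set (RoI K) // IsDisc K q D},
    ∑' D' : {D' : Set (RoI K) // IsDisc K q D' ∧ D' ⊆ D.1 ∧ μ D' = μ D.1 / (q : ℝ≥0∞)},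
      ENNReal.ofReal |(⨍ x in D'.1, f x ∂μ) - ⨍ x in D.1, f x ∂μ|

/-- The level `ℓ(γ)` of a character `γ : O → 𝕋`: the least `ℓ ≥ 0` such that `γ` is trivial
on `π^ℓ O`. -/
def charLevel (γ : AddChar (RoI K) Circle) : ℕ :=
  sInf {l : ℕ | ∀ y : RoI K, γ (π ^ l * y) = 1}

/-- The Fourier coefficient `f̂(γ) = ∫_O f(x) conj(γ(x)) dμ(x)`. -/
def fourierCoeff (μ : Measure (RoI K)) (f : RoI K → ℂ) (γ : AddChar (RoI K) Circle) : ℂ :=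
  ∫ x, f x * (starRingEnd ℂ) ((γ x : Circle) : ℂ) ∂μ

/-- The Fourier-analytic variation `V_Fourier(f) = Σ_{γ ≠ γ₀} q^{ℓ(γ)} |f̂(γ)|`, the sum over
all nontrivial continuous characters of `O`. -/
def VFourier (μ : Measure (RoI K)) (f : RoI K → ℝ) : ℝ≥0∞ :=
  ∑' γ : {γ : AddChar (RoI K) Circle // Continuous ⇑γ ∧ γ ≠ 1},
    ENNReal.ofReal ((q : ℝ) ^ charLevel K π γ.1 * ‖fourierCoeff K μ (fun x => (f x : ℂ)) γ.1‖)

/-- A function is a finite linear combination of characteristic functions of discs. -/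
def IsDiscSimple (g : RoI K → ℝ) : Prop :=
  ∃ (P : Finset (Set (RoI K))) (c : Set (RoI K) → ℝ),
    (∀ D ∈ P, IsDisc K q D) ∧ g = fun x => ∑ D ∈ P, c D * D.indicator 1 x

/-- Integrability in the sense of Beer: `f` can be squeezed between finite linear combinations
of characteristic functions of discs with integrals converging to each other. -/
def BeerIntegrable [MeasurableSpace K] (μ : Measure (RoI K)) (f : RoI K → ℝ) : Prop :=
  ∃ u v : ℕ → RoI K → ℝ,
    (∀ n, IsDiscSimple K q (u n)) ∧ (∀ n, IsDiscSimple K q (v n)) ∧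
    (∀ n x, u n x ≤ f x ∧ f x ≤ v n x) ∧
    Tendsto (fun n => ∫ x, (v n x - u n x) ∂μ) atTop (𝓝 0)

variable [LocallyCompactSpace K] [BorelSpace K]


/-! ### Auxiliary lemmas -/

section AuxLemmas

lemma mem_RoI {x : K} : x ∈ RoI K ↔ ‖x‖ ≤ 1 := Iff.rfl

lemma norm_coe_le_one (x : RoI K) : ‖(x : K)‖ ≤ 1 := x.2

lemma circle_coe_pow (w : Circle) (n : ℕ) : ((w ^ n : Circle) : ℂ) = (w : ℂ) ^ n := by
  induction n with
  | zero => simp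
  | succ n ih => rw [pow_succ, pow_succ, Circle.coe_mul, ih]

lemma circle_eq_one_of_re_pos {w : Circle} (h : ∀ n : ℕ, 0 < ((w ^ n : Circle) : ℂ).re) :
    w = 1 := by
  have habs : ‖(w : ℂ)‖ = 1 := Circle.norm_coe w
  set θ := Complex.arg (w : ℂ) with hθ
  have hc : (w : ℂ) = Complex.exp (θ * Complex.I) := by
    conv_lhs => rw [← Complex.norm_mul_exp_arg_mul_I (w : ℂ)]
    rw [habs, Complex.ofReal_one, one_mul]
  have hren : ∀ n : ℕ, ((w ^ n : Circle) : ℂ).re = Real.cos (n * θ) := by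
    intro n
    rw [circle_coe_pow, hc, ← Complex.exp_nat_mul]
    have h2 : (n : ℂ) * (↑θ * Complex.I) = (↑((n : ℝ) * θ) : ℂ) * Complex.I := by
      push_cast; ring
    rw [h2, Complex.exp_ofReal_mul_I_re]
  by_contra hw
  have hθne : θ ≠ 0 := by
    intro h0
    apply hw
    apply Circle.ext
    rw [hc, h0, Complex.ofReal_zero, zero_mul, Complex.exp_zero, Circle.coe_one]
  have hapos : 0 < |θ| := abs_pos.mpr hθne
  have haπ : |θ| ≤ Real.pi := Complex.abs_arg_le_pi _
  obtain ⟨n, hn1, hn2⟩ : ∃ n : ℕ, Real.pi / 2 ≤ n * |θ| ∧ n * |θ| ≤ Real.pi + Real.pi / 2 := by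
    by_cases hcase : Real.pi / 2 ≤ |θ|
    · exact ⟨1, by simpa using hcase, by push_cast; linarith [Real.pi_pos]⟩
    · push_neg at hcase
      have hceil : Real.pi / 2 / |θ| ≤ (⌈Real.pi / 2 / |θ|⌉₊ : ℝ) := Nat.le_ceil _
      have hlt : (⌈Real.pi / 2 / |θ|⌉₊ : ℝ) < Real.pi / 2 / |θ| + 1 :=
        Nat.ceil_lt_add_one (by positivity)
      refine ⟨⌈Real.pi / 2 / |θ|⌉₊, (div_le_iff₀ hapos).mp hceil, ?_⟩
      have h3 : (⌈Real.pi / 2 / |θ|⌉₊ : ℝ) * |θ| < (Real.pi / 2 / |θ| + 1) * |θ| :=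
        mul_lt_mul_of_pos_right hlt hapos
      rw [add_mul, div_mul_cancel₀ _ (ne_of_gt hapos), one_mul] at h3
      linarith [Real.pi_pos]
  have hcos : Real.cos ((n : ℝ) * |θ|) ≤ 0 := Real.cos_nonpos_of_pi_div_two_le_of_le hn1 hn2
  have habs2 : Real.cos ((n : ℝ) * θ) = Real.cos ((n : ℝ) * |θ|) := by
    rw [← Real.cos_abs ((n : ℝ) * θ), abs_mul, Nat.abs_cast]
  have hpos := h n
  rw [hren n, habs2] at hpos
  linarith

lemma exists_level (hπ1 : ‖(π : K)‖ < 1)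
    (γ : AddChar (RoI K) Circle) (hγ : Continuous ⇑γ) :
    ∃ l : ℕ, ∀ y : RoI K, γ (π ^ l * y) = 1 := by
  have hcont : Continuous fun y : RoI K => ((γ y : Circle) : ℂ).re :=
    Complex.continuous_re.comp ((continuous_induced_dom (α := Circle)).comp hγ)
  have hopen : IsOpen {y : RoI K | 0 < ((γ y : Circle) : ℂ).re} :=
    isOpen_Ioi.preimage hcont
  have h0 : (0 : RoI K) ∈ {y : RoI K | 0 < ((γ y : Circle) : ℂ).re} := by
    simp [AddChar.map_zero_eq_one]
  obtain ⟨δ, hδ, hball⟩ := Metric.isOpen_iff.mp hopen 0 h0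
  obtain ⟨l, hl⟩ := exists_pow_lt_of_lt_one hδ hπ1
  refine ⟨l, fun y => ?_⟩
  apply circle_eq_one_of_re_pos
  intro n
  have hmem : ∀ z : RoI K, (π ^ l * z) ∈ Metric.ball (0 : RoI K) δ := by
    intro z
    rw [Metric.mem_ball, Subtype.dist_eq]
    push_cast
    rw [dist_zero_right]
    calc ‖(π : K) ^ l * (z : K)‖ = ‖(π : K)‖ ^ l * ‖(z : K)‖ := by
          rw [norm_mul, norm_pow]
      _ ≤ ‖(π : K)‖ ^ l * 1 :=
          mul_le_mul_of_nonneg_left (norm_coe_le_one K z) (by positivity)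
      _ < δ := by rw [mul_one]; exact hl
  have hkey : (γ (π ^ l * y)) ^ n = γ (π ^ l * (n • y)) := by
    rw [mul_smul_comm, AddChar.map_nsmul_eq_pow]
  rw [hkey]
  exact hball (hmem (n • y))

lemma apply_eq_one_of_charLevel_le (hπ1 : ‖(π : K)‖ < 1) {γ : AddChar (RoI K) Circle}
    (hγ : Continuous ⇑γ) {L : ℕ} (hL : charLevel K π γ ≤ L) (y : RoI K) :
    γ (π ^ L * y) = 1 := by
  obtain ⟨l, hl⟩ := exists_level K π hπ1 γ hγ
  have hmem := Nat.sInf_mem (⟨l, hl⟩ : {l : ℕ | ∀ y : RoI K, γ (π ^ l * y) = 1}.Nonempty)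
  have heq : π ^ L * y = π ^ (charLevel K π γ) * (π ^ (L - charLevel K π γ) * y) := by
    rw [← mul_assoc, ← pow_add, Nat.add_sub_cancel' hL]
  rw [heq]
  exact hmem _

/-- The subgroup `π^L O` of the additive group of `O`. -/
def Aball (L : ℕ) : AddSubgroup (RoI K) where
  carrier := Set.range fun z : RoI K => π ^ L * z
  zero_mem' := ⟨0, mul_zero _⟩
  add_mem' := by rintro a b ⟨za, rfl⟩ ⟨zb, rfl⟩; exact ⟨za + zb, mul_add _ _ _⟩
  neg_mem' := by rintro a ⟨z, rfl⟩; exact ⟨-z, by ring⟩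

lemma mem_Aball_iff (hπ0 : (π : K) ≠ 0) {L : ℕ} {y : RoI K} :
    y ∈ Aball K π L ↔ ‖(y : K)‖ ≤ ‖(π : K)‖ ^ L := by
  constructor
  · rintro ⟨z, rfl⟩
    push_cast
    calc ‖(π : K) ^ L * (z : K)‖ = ‖(π : K)‖ ^ L * ‖(z : K)‖ := by rw [norm_mul, norm_pow]
      _ ≤ ‖(π : K)‖ ^ L * 1 :=
          mul_le_mul_of_nonneg_left (norm_coe_le_one K z) (by positivity)
      _ = ‖(π : K)‖ ^ L := mul_one _
  · intro hy
    have hπL : (π : K) ^ L ≠ 0 := pow_ne_zero _ hπ0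
    have hz : ‖(y : K) / (π : K) ^ L‖ ≤ 1 := by
      rw [norm_div, norm_pow, div_le_one (pow_pos (norm_pos_iff.mpr hπ0) L)]
      exact hy
    refine ⟨⟨(y : K) / (π : K) ^ L, hz⟩, ?_⟩
    apply Subtype.ext
    push_cast
    field_simp

lemma Aball_eq_preimage (hπ0 : (π : K) ≠ 0) (L : ℕ) :
    ((Aball K π L : Set (RoI K))) =
      (Subtype.val) ⁻¹' (Metric.closedBall (0 : K) (‖(π : K)‖ ^ L)) := by
  ext y
  rw [Set.mem_preimage, Metric.mem_closedBall, dist_zero_right, SetLike.mem_coe,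
    mem_Aball_iff K π hπ0]

lemma isOpen_Aball (hπ0 : (π : K) ≠ 0) (L : ℕ) : IsOpen ((Aball K π L : Set (RoI K))) := by
  rw [Aball_eq_preimage K π hπ0 L]
  exact (IsUltrametricDist.isOpen_closedBall _
    (pow_ne_zero _ (norm_ne_zero_iff.mpr hπ0))).preimage continuous_subtype_val

lemma measurableSet_Aball (hπ0 : (π : K) ≠ 0) (L : ℕ) :
    MeasurableSet ((Aball K π L : Set (RoI K))) := by
  rw [Aball_eq_preimage K π hπ0 L]
  exact Metric.isClosed_closedBall.measurableSet.preimage measurable_subtype_coe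

/-- The group of continuous characters of level at most `L`. -/
def levelGroup (hπ1 : ‖(π : K)‖ < 1) (L : ℕ) : Subgroup (AddChar (RoI K) Circle) where
  carrier := {γ | Continuous ⇑γ ∧ charLevel K π γ ≤ L}
  one_mem' := by
    constructor
    · have h : ⇑(1 : AddChar (RoI K) Circle) = fun _ => 1 := funext fun x => AddChar.one_apply x
      rw [h]; exact continuous_const
    · exact Nat.sInf_le fun y => AddChar.one_apply _
  mul_mem' := by
    rintro a b ⟨hac, hal⟩ ⟨hbc, hbl⟩
    constructor
    · have h : ⇑(a * b) = fun x => a x * b x := funext fun x => AddChar.mul_apply a b x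
      rw [h]; exact hac.mul hbc
    · refine Nat.sInf_le fun y => ?_
      rw [AddChar.mul_apply, apply_eq_one_of_charLevel_le K π hπ1 hac hal y,
        apply_eq_one_of_charLevel_le K π hπ1 hbc hbl y, one_mul]
  inv_mem' := by
    rintro a ⟨hac, hal⟩
    constructor
    · have h : ⇑(a⁻¹) = fun x => a (-x) := funext fun x => AddChar.inv_apply a x
      rw [h]; exact hac.comp continuous_neg
    · refine Nat.sInf_le fun y => ?_
      rw [AddChar.inv_apply, ← mul_neg]
      exact apply_eq_one_of_charLevel_le K π hπ1 hac hal (-y)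

lemma mem_levelGroup {hπ1 : ‖(π : K)‖ < 1} {L : ℕ} {γ : AddChar (RoI K) Circle} :
    γ ∈ levelGroup K π hπ1 L ↔ Continuous ⇑γ ∧ charLevel K π γ ≤ L := Iff.rfl

lemma levelGroup_apply_mem_eq_one {hπ1 : ‖(π : K)‖ < 1} {L : ℕ}
    (γ : levelGroup K π hπ1 L) {a : RoI K} (ha : a ∈ Aball K π L) : γ.1 a = 1 := by
  obtain ⟨z, rfl⟩ := ha
  exact apply_eq_one_of_charLevel_le K π hπ1 γ.2.1 γ.2.2 z

/-- The tautological equivalence between the subtype of continuous characters of level at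
most `L` and `levelGroup`. -/
def levelEquiv (hπ1 : ‖(π : K)‖ < 1) (L : ℕ) :
    {γ : AddChar (RoI K) Circle // Continuous ⇑γ ∧ charLevel K π γ ≤ L} ≃
      levelGroup K π hπ1 L where
  toFun := fun γ => ⟨γ.1, γ.2⟩
  invFun := fun γ => ⟨γ.1, γ.2⟩
  left_inv := fun _ => rfl
  right_inv := fun _ => rfl

lemma finite_levelGroup (hπ1 : ‖(π : K)‖ < 1) (L : ℕ)
    [Finite (RoI K ⧸ Aball K π L)] : Finite (levelGroup K π hπ1 L) := by
  classical
  set M := Nat.card (RoI K ⧸ Aball K π L) with hM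
  have hM0 : M ≠ 0 := Nat.card_pos.ne'
  have hroots : {z : ℂ | z ^ M = 1}.Finite := by
    refine (Polynomial.finite_setOf_isRoot
      (p := (Polynomial.X : Polynomial ℂ) ^ M - Polynomial.C 1) ?_).subset ?_
    · exact Polynomial.X_pow_sub_C_ne_zero (Nat.pos_of_ne_zero hM0) 1
    · intro z hz
      simp only [Set.mem_setOf_eq] at hz ⊢
      simp [Polynomial.IsRoot, hz]
  haveI := hroots.to_subtype
  have hpow : ∀ (γ : levelGroup K π hπ1 L) (y : RoI K), ((γ.1 y : Circle) : ℂ) ^ M = 1 := by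
    intro γ y
    rw [← circle_coe_pow, ← AddChar.map_nsmul_eq_pow]
    have hmem : (M • y) ∈ Aball K π L := by
      rw [← QuotientAddGroup.eq_zero_iff]
      rw [QuotientAddGroup.mk_nsmul]
      exact card_nsmul_eq_zero'
    rw [levelGroup_apply_mem_eq_one K π γ hmem, Circle.coe_one]
  have hout : ∀ (γ : levelGroup K π hπ1 L) (y : RoI K),
      γ.1 y = γ.1 ((y : RoI K ⧸ Aball K π L)).out := by
    intro γ y
    have h1 : ((((y : RoI K ⧸ Aball K π L)).out : RoI K) : RoI K ⧸ Aball K π L)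
        = (y : RoI K ⧸ Aball K π L) := QuotientAddGroup.out_eq' _
    have h2 : -(((y : RoI K ⧸ Aball K π L)).out) + y ∈ Aball K π L :=
      (QuotientAddGroup.eq (s := Aball K π L)).mp h1
    have h3 : y = ((y : RoI K ⧸ Aball K π L)).out + (-(((y : RoI K ⧸ Aball K π L)).out) + y) := by
      abel
    calc γ.1 y = γ.1 (((y : RoI K ⧸ Aball K π L)).out) * γ.1 (-(((y : RoI K ⧸ Aball K π L)).out) + y) := by
          rw [← AddChar.map_add_eq_mul, ← h3]
      _ = γ.1 (((y : RoI K ⧸ Aball K π L)).out) := by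
          rw [levelGroup_apply_mem_eq_one K π γ h2, mul_one]
  set F : levelGroup K π hπ1 L → ((RoI K ⧸ Aball K π L) → {z : ℂ | z ^ M = 1}) := fun γ q =>
    ⟨((γ.1 q.out : Circle) : ℂ), hpow γ q.out⟩ with hF
  have hinj : Function.Injective F := by
    intro γ γ' h
    apply Subtype.ext
    apply AddChar.ext
    intro y
    rw [hout γ y, hout γ' y]
    have := congrFun h (y : RoI K ⧸ Aball K π L)
    have hv := Subtype.ext_iff.mp this
    exact Circle.ext hv
  exact Finite.of_injective F hinj

lemma exists_sep_char (hπ1 : ‖(π : K)‖ < 1) (L : ℕ)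
    [Finite (RoI K ⧸ Aball K π L)] [DiscreteTopology (RoI K ⧸ Aball K π L)]
    {y : RoI K} (hy : y ∉ Aball K π L) :
    ∃ γ : AddChar (RoI K) Circle, γ ∈ levelGroup K π hπ1 L ∧ γ y ≠ 1 := by
  classical
  set A := Aball K π L with hA
  set Q := RoI K ⧸ A with hQ
  have ha : ((y : Q)) ≠ 0 := by
    rw [ne_eq, QuotientAddGroup.eq_zero_iff]
    exact hy
  haveI : NeZero ((Monoid.exponent (Multiplicative Q) : ℕ) : ℂ) :=
    ⟨Nat.cast_ne_zero.mpr Monoid.exponent_ne_zero_of_finite⟩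
  obtain ⟨φ, hφ⟩ := CommGroup.exists_apply_ne_one_of_hasEnoughRootsOfUnity (Multiplicative Q) ℂ
      (a := Multiplicative.ofAdd (y : Q)) (by rw [ne_eq, ofAdd_eq_one]; exact ha)
  have hnorm : ∀ b : Q, ‖((φ (Multiplicative.ofAdd b) : ℂˣ) : ℂ)‖ = 1 := by
    intro b
    have hexp : (φ (Multiplicative.ofAdd b)) ^ (Monoid.exponent (Multiplicative Q)) = 1 := by
      rw [← map_pow, Monoid.pow_exponent_eq_one, map_one]
    have h2 : ((φ (Multiplicative.ofAdd b) : ℂˣ) : ℂ) ^ (Monoid.exponent (Multiplicative Q)) = 1 := by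
      have h3 := congrArg (Units.val) hexp
      simpa using h3
    exact Complex.norm_eq_one_of_pow_eq_one h2 Monoid.exponent_ne_zero_of_finite
  set χ : AddChar Q Circle :=
    { toFun := fun b => ⟨((φ (Multiplicative.ofAdd b) : ℂˣ) : ℂ), by
        show _ ∈ Metric.sphere (0 : ℂ) 1
        exact mem_sphere_zero_iff_norm.mpr (hnorm b)⟩
      map_zero_eq_one' := by
        apply Circle.ext
        show ((φ (Multiplicative.ofAdd (0 : Q)) : ℂˣ) : ℂ) = 1
        rw [ofAdd_zero, map_one, Units.val_one]
      map_add_eq_mul' := by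
        intro a b
        apply Circle.ext
        show ((φ (Multiplicative.ofAdd (a + b)) : ℂˣ) : ℂ) = ((φ (Multiplicative.ofAdd a) : ℂˣ) : ℂ) * ((φ (Multiplicative.ofAdd b) : ℂˣ) : ℂ)
        rw [ofAdd_add, map_mul, Units.val_mul] } with hχ
  refine ⟨χ.compAddMonoidHom (QuotientAddGroup.mk' A), ⟨?_, ?_⟩, ?_⟩
  · show Continuous (⇑χ ∘ ⇑(QuotientAddGroup.mk' A))
    exact continuous_of_discreteTopology.comp continuous_quotient_mk'
  · refine Nat.sInf_le fun z => ?_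
    show χ (QuotientAddGroup.mk' A (π ^ L * z)) = 1
    have hm : (π ^ L * z) ∈ A := ⟨z, rfl⟩
    rw [QuotientAddGroup.mk'_apply, (QuotientAddGroup.eq_zero_iff _).mpr hm,
      AddChar.map_zero_eq_one]
  · show χ (QuotientAddGroup.mk' A y) ≠ 1
    rw [QuotientAddGroup.mk'_apply]
    intro hcontra
    apply hφ
    apply Units.ext
    rw [Units.val_one]
    have hval := Subtype.ext_iff.mp hcontra
    rwa [Circle.coe_one] at hval

end AuxLemmas

set_option maxHeartbeats 2000000 in
theorem fourier_series_partial_sums_converge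
    (hq : 1 < q)
    (hπ : ‖(π : K)‖ = (q : ℝ)⁻¹)
    (hunif : ∀ x : RoI K, ‖(x : K)‖ < 1 → ‖(x : K)‖ ≤ ‖(π : K)‖)
    (hres : Nat.card (↥(RoI K) ⧸ (Ideal.span {π} : Ideal ↥(RoI K))) = q)
    (μ : Measure (RoI K)) [IsProbabilityMeasure μ] [μ.IsAddHaarMeasure]
    (f : RoI K → ℂ) (hf : Integrable f μ) :
    (∀ x : RoI K, ContinuousAt f x →
      Tendsto (fun L : ℕ =>
          ∑' γ : {γ : AddChar (RoI K) Circle // Continuous ⇑γ ∧ charLevel K π γ ≤ L},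
            fourierCoeff K μ f γ.1 * ((γ.1 x : Circle) : ℂ))
        atTop (𝓝 (f x))) ∧
    (Continuous f → TendstoUniformly (fun (L : ℕ) (x : RoI K) =>
          ∑' γ : {γ : AddChar (RoI K) Circle // Continuous ⇑γ ∧ charLevel K π γ ≤ L},
            fourierCoeff K μ f γ.1 * ((γ.1 x : Circle) : ℂ)) f atTop) := by
  classical
  have hq1 : (1 : ℝ) < (q : ℝ) := by exact_mod_cast hq
  have hπpos : (0 : ℝ) < ‖(π : K)‖ := by
    rw [hπ]; exact inv_pos.mpr (lt_trans zero_lt_one hq1)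
  have hπ0 : (π : K) ≠ 0 := norm_pos_iff.mp hπpos
  have hπ1 : ‖(π : K)‖ < 1 := by
    rw [hπ]
    rw [inv_lt_one_iff₀]
    exact Or.inr hq1
  haveI : ProperSpace K :=
    ProperSpace.of_nontriviallyNormedField_of_weaklyLocallyCompactSpace K
  haveI : CompactSpace (RoI K) := by
    have hset : ((RoI K : Set K)) = Metric.closedBall 0 1 := by
      ext z
      rw [SetLike.mem_coe, mem_RoI, Metric.mem_closedBall, dist_zero_right]
    have hcpt : IsCompact ((RoI K : Set K)) := hset ▸ isCompact_closedBall 0 1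
    exact isCompact_iff_compactSpace.mp hcpt
  haveI : BorelSpace (RoI K) := Subtype.borelSpace (RoI K : Set K)
  haveI : SecondCountableTopology (RoI K) :=
    TopologicalSpace.Subtype.secondCountableTopology (RoI K : Set K)
  -- orthogonality of nontrivial continuous characters
  have hOrth : ∀ (ψ : AddChar (RoI K) Circle), Continuous ⇑ψ → ψ ≠ 1 →
      ∫ t, ((ψ t : Circle) : ℂ) ∂μ = 0 := by
    intro ψ hc hψ
    obtain ⟨a, ha⟩ := AddChar.ne_one_iff.mp hψ
    have hinv : ∫ t, ((ψ (a + t) : Circle) : ℂ) ∂μ = ∫ t, ((ψ t : Circle) : ℂ) ∂μ :=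
      integral_add_left_eq_self (fun t : RoI K => ((ψ t : Circle) : ℂ)) a
    have hmul : ∀ t : RoI K, ((ψ (a + t) : Circle) : ℂ) = ((ψ a : Circle) : ℂ) * ((ψ t : Circle) : ℂ) := by
      intro t; rw [AddChar.map_add_eq_mul, Circle.coe_mul]
    have h2 : ((ψ a : Circle) : ℂ) * ∫ t, ((ψ t : Circle) : ℂ) ∂μ = ∫ t, ((ψ t : Circle) : ℂ) ∂μ := by
      rw [← integral_const_mul, ← hinv]
      exact integral_congr_ae (Eventually.of_forall fun t => (hmul t).symm)
    have hne : ((ψ a : Circle) : ℂ) ≠ 1 := fun h => ha (Circle.ext (by rw [h, Circle.coe_one]))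
    exact eq_zero_of_mul_eq_self_left hne h2
  -- the key quantitative estimate
  have key : ∀ (L : ℕ) (x : RoI K) (ε : ℝ), 0 < ε →
      (∀ t : RoI K, ‖(x : K) - (t : K)‖ ≤ ‖(π : K)‖ ^ L → ‖f t - f x‖ ≤ ε) →
      dist (∑' γ : {γ : AddChar (RoI K) Circle // Continuous ⇑γ ∧ charLevel K π γ ≤ L},
        fourierCoeff K μ f γ.1 * ((γ.1 x : Circle) : ℂ)) (f x) ≤ ε := by
    intro L x ε hε hclose
    haveI hQfin : Finite (RoI K ⧸ Aball K π L) :=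
      AddSubgroup.quotient_finite_of_isOpen _ (isOpen_Aball K π hπ0 L)
    haveI hQdisc : DiscreteTopology (RoI K ⧸ Aball K π L) :=
      QuotientAddGroup.discreteTopology (isOpen_Aball K π hπ0 L)
    haveI : Finite (levelGroup K π hπ1 L) := finite_levelGroup K π hπ1 L
    haveI : Fintype (levelGroup K π hπ1 L) := Fintype.ofFinite _
    haveI : Nonempty (levelGroup K π hπ1 L) := ⟨1⟩
    set G := levelGroup K π hπ1 L with hGdef
    haveI : Fintype {γ : AddChar (RoI K) Circle // Continuous ⇑γ ∧ charLevel K π γ ≤ L} :=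
      Fintype.ofEquiv _ (levelEquiv K π hπ1 L).symm
    set A := Aball K π L with hAdef
    set N : ℕ := Fintype.card G with hNdef
    have hAmeas := measurableSet_Aball K π hπ0 L
    -- the Dirichlet kernel identity
    have kernel : ∀ y : RoI K, (∑ γ : G, ((γ.1 y : Circle) : ℂ)) =
        if y ∈ A then (N : ℂ) else 0 := by
      intro y
      by_cases hy : y ∈ A
      · rw [if_pos hy]
        have h1 : ∀ γ : G, ((γ.1 y : Circle) : ℂ) = 1 := fun γ => by
          rw [levelGroup_apply_mem_eq_one K π γ hy, Circle.coe_one]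
        rw [Finset.sum_congr rfl fun γ _ => h1 γ, Finset.sum_const, Finset.card_univ,
          nsmul_eq_mul, mul_one]
      · rw [if_neg hy]
        obtain ⟨γ₀, hγ₀G, hγ₀⟩ := exists_sep_char K π hπ1 L hy
        have hne : ((γ₀ y : Circle) : ℂ) ≠ 1 := fun h =>
          hγ₀ (Circle.ext (by rw [h, Circle.coe_one]))
        refine eq_zero_of_mul_eq_self_left hne ?_
        rw [Finset.mul_sum]
        exact Fintype.sum_bijective (fun t : G => (⟨γ₀, hγ₀G⟩ : G) * t)
          (Group.mulLeft_bijective _) _ _ (fun t => by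
            rw [Subgroup.coe_mul, AddChar.mul_apply, Circle.coe_mul])
    -- integrability of products with characters
    have hInt1 : ∀ (g : RoI K → ℂ) (c : RoI K → ℂ), Integrable g μ → Continuous c →
        (∀ t, ‖c t‖ ≤ 1) → Integrable (fun t => g t * c t) μ := by
      intro g c hg hc hbd
      have h1 : Integrable (fun t => c t * g t) μ :=
        hg.bdd_mul (c := 1) hc.aestronglyMeasurable (Eventually.of_forall hbd)
      exact h1.congr (Eventually.of_forall fun t => mul_comm _ _)
    -- the partial-sum identity
    have ident : ∀ (g : RoI K → ℂ), Integrable g μ → ∀ x' : RoI K,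
        (∑ γ : G, (∫ t, g t * (starRingEnd ℂ) ((γ.1 t : Circle) : ℂ) ∂μ) * ((γ.1 x' : Circle) : ℂ))
          = (N : ℂ) * ∫ t in {t : RoI K | x' - t ∈ A}, g t ∂μ := by
      intro g hg x'
      have hBmeas : MeasurableSet {t : RoI K | x' - t ∈ A} := by
        have hBeq : {t : RoI K | x' - t ∈ A} = (fun t => x' - t) ⁻¹' (A : Set (RoI K)) := rfl
        rw [hBeq]
        exact hAmeas.preimage (measurable_const.sub measurable_id)
      have hterm : ∀ γ : G,
          (∫ t, g t * (starRingEnd ℂ) ((γ.1 t : Circle) : ℂ) ∂μ) * ((γ.1 x' : Circle) : ℂ)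
            = ∫ t, g t * ((γ.1 (x' - t) : Circle) : ℂ) ∂μ := by
        intro γ
        rw [← integral_mul_const]
        refine integral_congr_ae (Eventually.of_forall fun t => ?_)
        dsimp only
        rw [mul_assoc]
        congr 1
        rw [← Circle.coe_inv_eq_conj, ← AddChar.map_neg_eq_inv, ← Circle.coe_mul,
          ← AddChar.map_add_eq_mul, neg_add_eq_sub]
      have hcont : ∀ γ : G, Continuous fun t : RoI K => ((γ.1 (x' - t) : Circle) : ℂ) :=
        fun γ => (continuous_induced_dom (α := Circle)).comp
          (γ.2.1.comp (continuous_const.sub continuous_id))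
      have hbd : ∀ (γ : G) (t : RoI K), ‖((γ.1 (x' - t) : Circle) : ℂ)‖ ≤ 1 := by
        intro γ t
        rw [Circle.norm_coe]
      rw [Finset.sum_congr rfl fun γ _ => hterm γ, ← integral_finset_sum _
        (fun γ _ => hInt1 g _ hg (hcont γ) (hbd γ))]
      have hpt : ∀ t : RoI K, (∑ γ : G, g t * ((γ.1 (x' - t) : Circle) : ℂ))
          = Set.indicator {t : RoI K | x' - t ∈ A} (fun t => (N : ℂ) * g t) t := by
        intro t
        rw [← Finset.mul_sum, kernel (x' - t)]
        by_cases h : x' - t ∈ A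
        · rw [if_pos h, Set.indicator_of_mem (show t ∈ {s : RoI K | x' - s ∈ A} from h),
            mul_comm]
        · rw [if_neg h, Set.indicator_of_notMem
            (show t ∉ {s : RoI K | x' - s ∈ A} from h), mul_zero]
      rw [integral_congr_ae (Eventually.of_forall hpt), integral_indicator hBmeas,
        integral_const_mul]
    set B := {t : RoI K | x - t ∈ A} with hBdef
    have hBmeas : MeasurableSet B := by
      have hBeq : B = (fun t => x - t) ⁻¹' (A : Set (RoI K)) := rfl
      rw [hBeq]
      exact hAmeas.preimage (measurable_const.sub measurable_id)
    have hμBfin : μ B < ⊤ := measure_lt_top μ B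
    -- the normalization : N * μ(B) = 1
    have hterm1 : ∀ γ : G,
        (∫ t, (1 : ℂ) * (starRingEnd ℂ) ((γ.1 t : Circle) : ℂ) ∂μ) * ((γ.1 x : Circle) : ℂ)
          = if γ = 1 then 1 else 0 := by
      intro γ
      by_cases h : γ = (1 : G)
      · subst h
        rw [if_pos rfl]
        have h1 : ∀ t : RoI K, (1 : ℂ) * (starRingEnd ℂ) ((((1 : G) : AddChar (RoI K) Circle) t : Circle) : ℂ) = 1 := by
          intro t
          rw [OneMemClass.coe_one, AddChar.one_apply, Circle.coe_one, map_one, one_mul]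
        rw [integral_congr_ae (Eventually.of_forall h1), integral_const, probReal_univ,
          one_smul, OneMemClass.coe_one, AddChar.one_apply,
          Circle.coe_one, one_mul]
      · rw [if_neg h]
        have hψ : (γ.1)⁻¹ ≠ 1 := by
          intro hcon
          apply h
          apply Subtype.ext
          rw [← inv_inv (γ.1), hcon, inv_one]
          rfl
        have hcont2 : Continuous ⇑(γ.1⁻¹) := by
          have := ((γ⁻¹ : G).2).1
          rwa [show ((γ⁻¹ : G) : AddChar (RoI K) Circle) = (γ.1)⁻¹ from rfl] at this
        have h0 : ∫ t, (((γ.1⁻¹) t : Circle) : ℂ) ∂μ = 0 := hOrth _ hcont2 hψ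
        have h1 : ∀ t : RoI K, (1 : ℂ) * (starRingEnd ℂ) ((γ.1 t : Circle) : ℂ)
            = (((γ.1⁻¹) t : Circle) : ℂ) := by
          intro t
          rw [one_mul, AddChar.inv_apply, AddChar.map_neg_eq_inv, Circle.coe_inv_eq_conj]
        rw [integral_congr_ae (Eventually.of_forall h1), h0, zero_mul]
    have hsum1 : (∑ γ : G,
        (∫ t, (1 : ℂ) * (starRingEnd ℂ) ((γ.1 t : Circle) : ℂ) ∂μ) * ((γ.1 x : Circle) : ℂ)) = 1 := by
      rw [Finset.sum_congr rfl fun γ _ => hterm1 γ,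
        Finset.sum_ite_eq' Finset.univ (1 : G) (fun _ => (1 : ℂ)),
        if_pos (Finset.mem_univ _)]
    have hcard := ident (fun _ => (1 : ℂ)) (integrable_const 1) x
    rw [hsum1, setIntegral_const] at hcard
    have hprodR : (N : ℝ) * (μ B).toReal = 1 := by
      have := hcard
      rw [Complex.real_smul, mul_one] at this
      exact_mod_cast this.symm
    -- the partial sum
    have htsum : (∑' γ : {γ : AddChar (RoI K) Circle // Continuous ⇑γ ∧ charLevel K π γ ≤ L},
        fourierCoeff K μ f γ.1 * ((γ.1 x : Circle) : ℂ))
        = ∑ γ : G, (∫ t, f t * (starRingEnd ℂ) ((γ.1 t : Circle) : ℂ) ∂μ) * ((γ.1 x : Circle) : ℂ) := by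
      rw [tsum_fintype]
      exact Fintype.sum_equiv (levelEquiv K π hπ1 L) _ _ (fun γ => rfl)
    have hS := ident f hf x
    rw [dist_eq_norm, htsum, hS]
    -- split off the constant
    have hconst : IntegrableOn (fun _ : RoI K => f x) B μ :=
      integrableOn_const hμBfin.ne
    have hsplit : ∫ t in B, (f t - f x) ∂μ = (∫ t in B, f t ∂μ) - (μ B).toReal • f x := by
      rw [integral_sub hf.integrableOn hconst, setIntegral_const]; rfl
    have hgoal : (N : ℂ) * ∫ t in B, f t ∂μ - f x = (N : ℂ) * ∫ t in B, (f t - f x) ∂μ := by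
      rw [hsplit, mul_sub]
      congr 1
      rw [Complex.real_smul, ← mul_assoc]
      rw [show ((N : ℂ) * ((μ B).toReal : ℂ)) = (((N : ℝ) * (μ B).toReal : ℝ) : ℂ) by push_cast; ring,
        hprodR]
      rw [Complex.ofReal_one, one_mul]
    rw [hgoal]
    have hbound : ‖∫ t in B, (f t - f x) ∂μ‖ ≤ ε * (μ B).toReal := by
      refine norm_setIntegral_le_of_norm_le_const hμBfin ?_
      · intro t ht
        have hxt : x - t ∈ A := ht
        have hnorm : ‖(x : K) - (t : K)‖ ≤ ‖(π : K)‖ ^ L := by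
          have := (mem_Aball_iff K π hπ0).mp hxt
          rwa [show (((x - t : RoI K)) : K) = (x : K) - (t : K) by push_cast; ring] at this
        exact hclose t hnorm
    calc ‖(N : ℂ) * ∫ t in B, (f t - f x) ∂μ‖
        = (N : ℝ) * ‖∫ t in B, (f t - f x) ∂μ‖ := by
          rw [norm_mul, Complex.norm_natCast]
      _ ≤ (N : ℝ) * (ε * (μ B).toReal) := by
          exact mul_le_mul_of_nonneg_left hbound (Nat.cast_nonneg N)
      _ = ε * ((N : ℝ) * (μ B).toReal) := by ring
      _ = ε := by rw [hprodR, mul_one]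
  constructor
  · intro x hx
    rw [Metric.tendsto_atTop]
    intro ε hε
    obtain ⟨δ, hδ, hδ2⟩ := Metric.continuousAt_iff.mp hx (ε / 2) (by linarith)
    have hev : ∀ᶠ L in atTop, ‖(π : K)‖ ^ L < δ :=
      (tendsto_pow_atTop_nhds_zero_of_lt_one (norm_nonneg _) hπ1).eventually
        (gt_mem_nhds hδ)
    obtain ⟨Lo, hLo⟩ := eventually_atTop.mp hev
    refine ⟨Lo, fun L hL => ?_⟩
    have hb : ∀ t : RoI K, ‖(x : K) - (t : K)‖ ≤ ‖(π : K)‖ ^ L → ‖f t - f x‖ ≤ ε / 2 := by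
      intro t ht
      have hd : dist t x < δ := by
        rw [Subtype.dist_eq, dist_eq_norm, norm_sub_rev]
        exact lt_of_le_of_lt ht (hLo L hL)
      have := hδ2 hd
      rw [dist_eq_norm] at this
      exact le_of_lt this
    exact lt_of_le_of_lt (key L x (ε / 2) (by linarith) hb) (by linarith)
  · intro hfc
    rw [Metric.tendstoUniformly_iff]
    intro ε hε
    have hUC := CompactSpace.uniformContinuous_of_continuous hfc
    obtain ⟨δ, hδ, hδ2⟩ := Metric.uniformContinuous_iff.mp hUC (ε / 2) (by linarith)
    have hev : ∀ᶠ L in atTop, ‖(π : K)‖ ^ L < δ :=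
      (tendsto_pow_atTop_nhds_zero_of_lt_one (norm_nonneg _) hπ1).eventually
        (gt_mem_nhds hδ)
    filter_upwards [hev] with L hL x
    rw [dist_comm]
    have hb : ∀ t : RoI K, ‖(x : K) - (t : K)‖ ≤ ‖(π : K)‖ ^ L → ‖f t - f x‖ ≤ ε / 2 := by
      intro t ht
      have hd : dist t x < δ := by
        rw [Subtype.dist_eq, dist_eq_norm, norm_sub_rev]
        exact lt_of_le_of_lt ht hL
      have := hδ2 hd
      rw [dist_eq_norm] at this
      exact le_of_lt this
    exact lt_of_le_of_lt (key L x (ε / 2) (by linarith) hb) (by linarith)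

end NAKoksma
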